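/- Let F : ℝ^{n_x} × ℝ^{n_u} → ℝ^{n_x} be twice continuously differentiable with F(0,0) = 0, let U ⊆ ℝ^{n_u} contain the origin in its interior, let W_x, ΔQ be symmetric positive definite n_x×n_x matrices and W_u a symmetric positive definite n_u×n_u matrix, let L be a real n_u×n_x matrix, set Φ := ∂F/∂x(0,0), Γ := ∂F/∂u(0,0), Φ_L := Φ − Γ L, and suppose P is a symmetric positive definite matrix solving Φ_Lᵀ P Φ_L − P = −(W_x + Lᵀ W_u L + ΔQ). Then there exists α > 0 such that, with Ω := {x ∈ ℝ^{n_x} : xᵀ P x ≤ α}, every trajectory x(k+1) = F(x(k), −L x(k)) with x(0) ∈ Ω satisfies: x(k) ∈ Ω and −L x(k) ∈ U for all k ∈ ℕ, and x(k) → 0 as k → ∞. -/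

import Mathlib

open Matrix

private lemma TRdual.dot_abs_le (n : ℕ) (v w : Fin n → ℝ) : |v ⬝ᵥ w| ≤ n * ‖v‖ * ‖w‖ := by
  calc |∑ i, v i * w i| ≤ ∑ i : Fin n, |v i * w i| := Finset.abs_sum_le_sum_abs _ _
    _ ≤ ∑ _i : Fin n, ‖v‖ * ‖w‖ := by
        refine Finset.sum_le_sum fun i _ => ?_
        rw [abs_mul]
        exact mul_le_mul (norm_le_pi_norm v i) (norm_le_pi_norm w i) (abs_nonneg _) (norm_nonneg _)
    _ = n * ‖v‖ * ‖w‖ := by simp [Finset.sum_const, mul_assoc]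

private lemma TRdual.mulVec_bound (m n : ℕ) (B : Matrix (Fin m) (Fin n) ℝ) :
    ∃ C > 0, ∀ v, ‖B *ᵥ v‖ ≤ C * ‖v‖ := by
  let f := LinearMap.toContinuousLinearMap B.mulVecLin
  refine ⟨‖f‖ + 1, by positivity, fun v => ?_⟩
  calc ‖B *ᵥ v‖ = ‖f v‖ := rfl
    _ ≤ ‖f‖ * ‖v‖ := f.le_opNorm v
    _ ≤ (‖f‖ + 1) * ‖v‖ := by nlinarith [norm_nonneg v, norm_nonneg f]

private lemma TRdual.dot_mulVec_le (n : ℕ) (P : Matrix (Fin n) (Fin n) ℝ) (CP : ℝ)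
    (hCPb : ∀ v, ‖P *ᵥ v‖ ≤ CP * ‖v‖) (v w : Fin n → ℝ) :
    v ⬝ᵥ P *ᵥ w ≤ (n : ℝ) * CP * (‖v‖ * ‖w‖) := by
  have h1 := TRdual.dot_abs_le n v (P *ᵥ w)
  have h2 := hCPb w
  have h3 := le_abs_self (v ⬝ᵥ P *ᵥ w)
  nlinarith [mul_le_mul_of_nonneg_left h2 (by positivity : (0:ℝ) ≤ (n : ℝ) * ‖v‖)]

private lemma TRdual.dot_transpose (n m : ℕ) (B : Matrix (Fin m) (Fin n) ℝ)
    (x : Fin n → ℝ) (w : Fin m → ℝ) :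
    x ⬝ᵥ (Bᵀ *ᵥ w) = (B *ᵥ x) ⬝ᵥ w := by
  rw [Matrix.dotProduct_mulVec, Matrix.vecMul_transpose]

private lemma TRdual.quad_transpose (n m : ℕ) (B : Matrix (Fin m) (Fin n) ℝ)
    (Wq : Matrix (Fin m) (Fin m) ℝ) (x : Fin n → ℝ) :
    x ⬝ᵥ ((Bᵀ * Wq * B) *ᵥ x) = (B *ᵥ x) ⬝ᵥ Wq *ᵥ (B *ᵥ x) := by
  calc x ⬝ᵥ ((Bᵀ * Wq * B) *ᵥ x) = x ⬝ᵥ (Bᵀ *ᵥ ((Wq * B) *ᵥ x)) := by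
        rw [Matrix.mulVec_mulVec, Matrix.mul_assoc]
    _ = (B *ᵥ x) ⬝ᵥ ((Wq * B) *ᵥ x) := TRdual.dot_transpose n m B x _
    _ = (B *ᵥ x) ⬝ᵥ Wq *ᵥ (B *ᵥ x) := by rw [Matrix.mulVec_mulVec]

private lemma TRdual.quad_cont (n : ℕ) (M : Matrix (Fin n) (Fin n) ℝ) :
    Continuous fun x : Fin n → ℝ => x ⬝ᵥ M *ᵥ x := by
  simp only [dotProduct, Matrix.mulVec]
  fun_prop

private lemma TRdual.posdef_lower (n : ℕ) (M : Matrix (Fin n) (Fin n) ℝ) (hM : M.PosDef) :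
    ∃ m > 0, ∀ x : Fin n → ℝ, m * ‖x‖ ^ 2 ≤ x ⬝ᵥ M *ᵥ x := by
  rcases Nat.eq_zero_or_pos n with h0 | hn
  · refine ⟨1, one_pos, fun x => ?_⟩
    subst h0
    have hx : x = 0 := Subsingleton.elim _ _
    have h1 : ‖x‖ = 0 := by rw [hx]; exact norm_zero
    have h2 : x ⬝ᵥ M *ᵥ x = 0 := by simp [dotProduct]
    rw [h1, h2]; norm_num
  · haveI : Nonempty (Fin n) := Fin.pos_iff_nonempty.mp hn
    have hcs : IsCompact (Metric.sphere (0 : Fin n → ℝ) 1) := isCompact_sphere _ _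
    have hne : (Metric.sphere (0 : Fin n → ℝ) 1).Nonempty :=
      NormedSpace.sphere_nonempty.mpr zero_le_one
    obtain ⟨x₀, hx₀mem, hx₀min⟩ := hcs.exists_isMinOn hne (TRdual.quad_cont n M).continuousOn
    have hx₀norm : ‖x₀‖ = 1 := by simpa using hx₀mem
    have hx₀ne : x₀ ≠ 0 := by intro h; rw [h] at hx₀norm; simp at hx₀norm
    have hm : 0 < x₀ ⬝ᵥ M *ᵥ x₀ := by simpa using hM.dotProduct_mulVec_pos hx₀ne
    refine ⟨_, hm, fun x => ?_⟩
    rcases eq_or_ne x 0 with rfl | hx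
    · simp
    · have hxn : (0:ℝ) < ‖x‖ := norm_pos_iff.mpr hx
      set u : Fin n → ℝ := ‖x‖⁻¹ • x with hu
      have hun : u ∈ Metric.sphere (0 : Fin n → ℝ) 1 := by
        simp [hu, norm_smul, abs_of_pos (inv_pos.mpr hxn), inv_mul_cancel₀ hxn.ne']
      have hq : u ⬝ᵥ M *ᵥ u = ‖x‖⁻¹ ^ 2 * (x ⬝ᵥ M *ᵥ x) := by
        simp only [hu, Matrix.mulVec_smul, smul_dotProduct, dotProduct_smul,
          smul_eq_mul]
        ring
      have h1 := hx₀min hun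
      simp only [Set.mem_setOf_eq, hq] at h1
      have h2 : (x₀ ⬝ᵥ M *ᵥ x₀) * ‖x‖ ^ 2 ≤ ‖x‖⁻¹ ^ 2 * (x ⬝ᵥ M *ᵥ x) * ‖x‖ ^ 2 := by
        nlinarith [sq_nonneg ‖x‖]
      calc (x₀ ⬝ᵥ M *ᵥ x₀) * ‖x‖ ^ 2 ≤ ‖x‖⁻¹ ^ 2 * (x ⬝ᵥ M *ᵥ x) * ‖x‖ ^ 2 := h2
        _ = x ⬝ᵥ M *ᵥ x := by field_simp

private lemma TRdual.littleO (nx nu : ℕ)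
    (F : (Fin nx → ℝ) × (Fin nu → ℝ) → (Fin nx → ℝ))
    (hF : ContDiff ℝ 2 F) (hF0 : F (0, 0) = 0)
    (L : Matrix (Fin nu) (Fin nx) ℝ)
    (Φ : Matrix (Fin nx) (Fin nx) ℝ) (Γ : Matrix (Fin nx) (Fin nu) ℝ)
    (hΦΓ : ∀ p : (Fin nx → ℝ) × (Fin nu → ℝ),
      fderiv ℝ F (0, 0) p = Φ *ᵥ p.1 + Γ *ᵥ p.2) :
    (fun h => F (h, -(L *ᵥ h)) - (Φ - Γ * L) *ᵥ h) =o[nhds 0] (fun h => h) := by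
  set A := Φ - Γ * L with hA
  let jlin : (Fin nx → ℝ) →ₗ[ℝ] (Fin nx → ℝ) × (Fin nu → ℝ) :=
    LinearMap.prod LinearMap.id (-(L.mulVecLin))
  let j := LinearMap.toContinuousLinearMap jlin
  have hjfun : ∀ v, j v = (v, -(L *ᵥ v)) := fun v => rfl
  have hFd : HasFDerivAt F (fderiv ℝ F (0, 0)) ((0 : Fin nx → ℝ), (0 : Fin nu → ℝ)) :=
    ((hF.differentiable (by norm_num)) _).hasFDerivAt
  have hj : HasFDerivAt (fun v : Fin nx → ℝ => (v, -(L *ᵥ v))) j 0 := by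
    have h := j.hasFDerivAt (x := (0 : Fin nx → ℝ))
    exact h.congr_of_eventuallyEq (by filter_upwards with v using (hjfun v).symm)
  have hGc : HasFDerivAt (F ∘ fun v : Fin nx → ℝ => (v, -(L *ᵥ v)))
      ((fderiv ℝ F (0, 0)).comp j) 0 := by
    refine HasFDerivAt.comp 0 ?_ hj
    simpa using hFd
  have hG : HasFDerivAt (fun v : Fin nx → ℝ => F (v, -(L *ᵥ v)))
      ((fderiv ℝ F (0, 0)).comp j) 0 := hGc
  have hD : ∀ v, ((fderiv ℝ F (0, 0)).comp j) v = A *ᵥ v := by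
    intro v
    rw [ContinuousLinearMap.comp_apply, hjfun v, hΦΓ (v, -(L *ᵥ v))]
    simp only [Matrix.mulVec_neg, hA, Matrix.sub_mulVec, ← Matrix.mulVec_mulVec]
    abel
  have hlo := hasFDerivAt_iff_isLittleO_nhds_zero.mp hG
  have heq : (fun h : Fin nx → ℝ => F (0 + h, -(L *ᵥ (0 + h))) - F (0, -(L *ᵥ 0))
      - ((fderiv ℝ F (0, 0)).comp j) h) = fun h => F (h, -(L *ᵥ h)) - A *ᵥ h := by
    funext h
    rw [hD h]
    have hF0' : F 0 = 0 := hF0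
    simp [hF0', hF0]
  rw [heq] at hlo
  exact hlo

set_option maxHeartbeats 2000000 in
/-- Dual-mode property of the terminal region: under the hypotheses of Lemma 1, there exists
`α > 0` such that every closed-loop trajectory `x(k+1) = F(x(k), -L x(k))` starting in
`Ω = {x | xᵀ P x ≤ α}` stays in `Ω`, has admissible inputs `-L x(k) ∈ U` at all times, and
converges to the origin. -/
theorem terminal_region_dual_mode (nx nu : ℕ)
    (F : (Fin nx → ℝ) × (Fin nu → ℝ) → (Fin nx → ℝ))
    (hF : ContDiff ℝ 2 F) (hF0 : F (0, 0) = 0)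
    (U : Set (Fin nu → ℝ)) (hU : (0 : Fin nu → ℝ) ∈ interior U)
    (Wx ΔQ : Matrix (Fin nx) (Fin nx) ℝ) (hWx : Wx.PosDef) (hΔQ : ΔQ.PosDef)
    (Wu : Matrix (Fin nu) (Fin nu) ℝ) (hWu : Wu.PosDef)
    (L : Matrix (Fin nu) (Fin nx) ℝ)
    (Φ : Matrix (Fin nx) (Fin nx) ℝ) (Γ : Matrix (Fin nx) (Fin nu) ℝ)
    (hΦΓ : ∀ p : (Fin nx → ℝ) × (Fin nu → ℝ),
      fderiv ℝ F (0, 0) p = Φ *ᵥ p.1 + Γ *ᵥ p.2)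
    (P : Matrix (Fin nx) (Fin nx) ℝ) (hP : P.PosDef)
    (hLyap : (Φ - Γ * L)ᵀ * P * (Φ - Γ * L) - P = -(Wx + Lᵀ * Wu * L + ΔQ)) :
    ∃ α > (0 : ℝ),
      ∀ x : ℕ → Fin nx → ℝ, (∀ k, x (k + 1) = F (x k, -(L *ᵥ x k))) →
        (x 0) ⬝ᵥ (P *ᵥ x 0) ≤ α →
        (∀ k : ℕ, (x k) ⬝ᵥ (P *ᵥ x k) ≤ α ∧ -(L *ᵥ x k) ∈ U) ∧
        Filter.Tendsto x Filter.atTop (nhds 0) := by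
  classical
  -- constants
  obtain ⟨m, hm, hmP⟩ := TRdual.posdef_lower nx P hP
  obtain ⟨δ, hδ, hδQ⟩ := TRdual.posdef_lower nx ΔQ hΔQ
  obtain ⟨CP, hCP, hCPb⟩ := TRdual.mulVec_bound nx nx P
  obtain ⟨CA, hCA, hCAb⟩ := TRdual.mulVec_bound nx nx (Φ - Γ * L)
  obtain ⟨CL, hCL, hCLb⟩ := TRdual.mulVec_bound nu nx L
  have hVnn : ∀ v : Fin nx → ℝ, 0 ≤ v ⬝ᵥ P *ᵥ v := fun v => by
    simpa using hP.posSemidef.dotProduct_mulVec_nonneg v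
  -- upper quadratic bound for V
  obtain ⟨Mq, hMq, hVle⟩ : ∃ Mq > (0:ℝ), ∀ v : Fin nx → ℝ, v ⬝ᵥ P *ᵥ v ≤ Mq * ‖v‖ ^ 2 := by
    refine ⟨(nx : ℝ) * CP + 1, by positivity, fun v => ?_⟩
    have := TRdual.dot_mulVec_le nx P CP hCPb v v
    nlinarith [norm_nonneg v, sq_nonneg ‖v‖]
  -- choice of ε
  obtain ⟨ε, hε0, hε1, hεK⟩ : ∃ ε : ℝ, 0 < ε ∧ ε ≤ 1 ∧
      ε * (2 * nx * CP * CA + nx * CP) ≤ δ / 2 := by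
    refine ⟨min 1 (δ / (2 * (2 * nx * CP * CA + nx * CP + 1))),
      lt_min one_pos (by positivity), min_le_left _ _, ?_⟩
    have hK0 : (0:ℝ) ≤ 2 * nx * CP * CA + nx * CP := by positivity
    have h1 : min 1 (δ / (2 * (2 * nx * CP * CA + nx * CP + 1)))
        ≤ δ / (2 * (2 * nx * CP * CA + nx * CP + 1)) := min_le_right _ _
    have h2 := mul_le_mul_of_nonneg_right h1 hK0
    have h3 : (δ / (2 * (2 * nx * CP * CA + nx * CP + 1))) * (2 * nx * CP * CA + nx * CP)
        ≤ δ / 2 := by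
      rw [div_mul_eq_mul_div, div_le_div_iff₀ (by positivity) two_pos]
      nlinarith
    linarith
  -- little-o remainder and radius r₀
  have hlo := TRdual.littleO nx nu F hF hF0 L Φ Γ hΦΓ
  have hev := (Asymptotics.isLittleO_iff.mp hlo) hε0
  obtain ⟨r₀, hr₀, hball⟩ := Metric.eventually_nhds_iff.mp hev
  -- radius ρ for admissibility
  obtain ⟨ρ, hρ, hρsub⟩ := Metric.mem_nhds_iff.mp (mem_interior_iff_mem_nhds.mp hU)
  -- the size s
  obtain ⟨s, hs, hs1, hs2⟩ : ∃ s : ℝ, 0 < s ∧ s < r₀ ∧ CL * s ≤ ρ / 2 := by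
    refine ⟨min (r₀ / 2) (ρ / (2 * CL)), lt_min (by positivity) (by positivity),
      lt_of_le_of_lt (min_le_left _ _) (by linarith), ?_⟩
    have h1 : min (r₀ / 2) (ρ / (2 * CL)) ≤ ρ / (2 * CL) := min_le_right _ _
    have h2 := mul_le_mul_of_nonneg_left h1 hCL.le
    have h3 : CL * (ρ / (2 * CL)) = ρ / 2 := by field_simp
    linarith
  refine ⟨m * s ^ 2, by positivity, ?_⟩
  have hα : (0:ℝ) < m * s ^ 2 := by positivity
  -- decay rate θ
  obtain ⟨θ, hθ0, hθ1, hθge⟩ : ∃ θ : ℝ, 0 ≤ θ ∧ θ < 1 ∧ 1 - δ / (2 * Mq) ≤ θ := by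
    refine ⟨max (1 - δ / (2 * Mq)) (1 / 2),
      le_trans (by norm_num) (le_max_right _ _), ?_, le_max_left _ _⟩
    apply max_lt _ (by norm_num)
    have : 0 < δ / (2 * Mq) := by positivity
    linarith
  -- the key one-step estimate
  have hstep : ∀ y : Fin nx → ℝ, y ⬝ᵥ P *ᵥ y ≤ m * s ^ 2 →
      F (y, -(L *ᵥ y)) ⬝ᵥ P *ᵥ F (y, -(L *ᵥ y)) ≤ θ * (y ⬝ᵥ P *ᵥ y) ∧ -(L *ᵥ y) ∈ U := by
    intro y hyα
    have hy0 : (0:ℝ) ≤ ‖y‖ := norm_nonneg y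
    have hys : ‖y‖ ≤ s := by
      have h1 : m * ‖y‖ ^ 2 ≤ m * s ^ 2 := le_trans (hmP y) hyα
      have h2 : ‖y‖ ^ 2 ≤ s ^ 2 := by nlinarith
      nlinarith [norm_nonneg y]
    -- admissibility
    have hmem : -(L *ᵥ y) ∈ U := by
      apply hρsub
      rw [Metric.mem_ball, dist_zero_right, norm_neg]
      have h1 : ‖L *ᵥ y‖ ≤ CL * ‖y‖ := hCLb y
      have h2 : CL * ‖y‖ ≤ CL * s := mul_le_mul_of_nonneg_left hys hCL.le
      linarith
    refine ⟨?_, hmem⟩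
    -- remainder bound
    have hyr : ‖y‖ < r₀ := lt_of_le_of_lt hys hs1
    have hru : ‖F (y, -(L *ᵥ y)) - (Φ - Γ * L) *ᵥ y‖ ≤ ε * ‖y‖ :=
      hball (by rwa [dist_zero_right])
    set r : Fin nx → ℝ := F (y, -(L *ᵥ y)) - (Φ - Γ * L) *ᵥ y with hrdef
    set a : Fin nx → ℝ := (Φ - Γ * L) *ᵥ y with hadef
    have hgd : F (y, -(L *ᵥ y)) = a + r := by rw [hrdef, hadef]; abel
    have hr0 : (0:ℝ) ≤ ‖r‖ := norm_nonneg r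
    have hav : ‖a‖ ≤ CA * ‖y‖ := by rw [hadef]; exact hCAb y
    -- expansion of the quadratic form
    have hexp : F (y, -(L *ᵥ y)) ⬝ᵥ P *ᵥ F (y, -(L *ᵥ y))
        = a ⬝ᵥ P *ᵥ a + (a ⬝ᵥ P *ᵥ r + r ⬝ᵥ P *ᵥ a + r ⬝ᵥ P *ᵥ r) := by
      rw [hgd]
      simp only [Matrix.mulVec_add, dotProduct_add, add_dotProduct]
      ring
    -- Lyapunov identity
    have hmatid : (Φ - Γ * L)ᵀ * P * (Φ - Γ * L) = P - Wx - Lᵀ * Wu * L - ΔQ := by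
      have h2 : (Φ - Γ * L)ᵀ * P * (Φ - Γ * L) = -(Wx + Lᵀ * Wu * L + ΔQ) + P :=
        sub_eq_iff_eq_add.mp hLyap
      rw [h2]; abel
    have hquadA : a ⬝ᵥ P *ᵥ a = y ⬝ᵥ (((Φ - Γ * L)ᵀ * P * (Φ - Γ * L)) *ᵥ y) := by
      rw [hadef]; exact (TRdual.quad_transpose nx nx (Φ - Γ * L) P y).symm
    clear hadef hrdef
    clear_value r a
    have hLWL : y ⬝ᵥ ((Lᵀ * Wu * L) *ᵥ y) = (L *ᵥ y) ⬝ᵥ Wu *ᵥ (L *ᵥ y) :=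
      TRdual.quad_transpose nx nu L Wu y
    have hWx0 : 0 ≤ y ⬝ᵥ Wx *ᵥ y := by simpa using hWx.posSemidef.dotProduct_mulVec_nonneg y
    have hWu0 : 0 ≤ y ⬝ᵥ ((Lᵀ * Wu * L) *ᵥ y) := by
      rw [hLWL]; simpa using hWu.posSemidef.dotProduct_mulVec_nonneg (L *ᵥ y)
    have hΔy : δ * ‖y‖ ^ 2 ≤ y ⬝ᵥ ΔQ *ᵥ y := hδQ y
    have haPa : a ⬝ᵥ P *ᵥ a
        = y ⬝ᵥ P *ᵥ y - y ⬝ᵥ Wx *ᵥ y - y ⬝ᵥ ((Lᵀ * Wu * L) *ᵥ y) - y ⬝ᵥ ΔQ *ᵥ y := by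
      rw [hquadA, hmatid]
      simp only [Matrix.sub_mulVec, dotProduct_sub]
    -- cross term bounds
    have d1 : a ⬝ᵥ P *ᵥ r ≤ (nx : ℝ) * CP * (‖a‖ * ‖r‖) := TRdual.dot_mulVec_le nx P CP hCPb a r
    have d2 : r ⬝ᵥ P *ᵥ a ≤ (nx : ℝ) * CP * (‖r‖ * ‖a‖) := TRdual.dot_mulVec_le nx P CP hCPb r a
    have d3 : r ⬝ᵥ P *ᵥ r ≤ (nx : ℝ) * CP * (‖r‖ * ‖r‖) := TRdual.dot_mulVec_le nx P CP hCPb r r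
    have hnxCP : (0:ℝ) ≤ (nx : ℝ) * CP := by positivity
    have c1 : ‖a‖ * ‖r‖ ≤ (CA * ‖y‖) * (ε * ‖y‖) :=
      mul_le_mul hav hru hr0 (by positivity)
    have c1' : ‖r‖ * ‖a‖ ≤ (CA * ‖y‖) * (ε * ‖y‖) := by rw [mul_comm]; exact c1
    have c2 : ‖r‖ * ‖r‖ ≤ (ε * ‖y‖) * (ε * ‖y‖) :=
      mul_le_mul hru hru hr0 (by positivity)
    have c3 : (ε * ‖y‖) * (ε * ‖y‖) ≤ ε * (‖y‖ * ‖y‖) := by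
      nlinarith [mul_nonneg (mul_nonneg hε0.le (sub_nonneg.mpr hε1)) (mul_nonneg hy0 hy0)]
    have hsum : a ⬝ᵥ P *ᵥ r + r ⬝ᵥ P *ᵥ a + r ⬝ᵥ P *ᵥ r ≤ (δ / 2) * ‖y‖ ^ 2 := by
      nlinarith [mul_le_mul_of_nonneg_left c1 hnxCP,
        mul_le_mul_of_nonneg_left c1' hnxCP,
        mul_le_mul_of_nonneg_left (c2.trans c3) hnxCP,
        mul_le_mul_of_nonneg_right hεK (mul_nonneg hy0 hy0)]
    -- combine
    have hdiv : (δ / (2 * Mq)) * (y ⬝ᵥ P *ᵥ y) ≤ (δ / 2) * ‖y‖ ^ 2 := by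
      have h1 : (δ / (2 * Mq)) * (y ⬝ᵥ P *ᵥ y) ≤ (δ / (2 * Mq)) * (Mq * ‖y‖ ^ 2) :=
        mul_le_mul_of_nonneg_left (hVle y) (by positivity)
      have h2 : (δ / (2 * Mq)) * (Mq * ‖y‖ ^ 2) = (δ / 2) * ‖y‖ ^ 2 := by
        field_simp
      linarith
    have hVy0 : 0 ≤ y ⬝ᵥ P *ᵥ y := hVnn y
    have hfin : F (y, -(L *ᵥ y)) ⬝ᵥ P *ᵥ F (y, -(L *ᵥ y))
        ≤ (1 - δ / (2 * Mq)) * (y ⬝ᵥ P *ᵥ y) := by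
      rw [hexp, haPa]
      nlinarith []
    calc F (y, -(L *ᵥ y)) ⬝ᵥ P *ᵥ F (y, -(L *ᵥ y))
        ≤ (1 - δ / (2 * Mq)) * (y ⬝ᵥ P *ᵥ y) := hfin
      _ ≤ θ * (y ⬝ᵥ P *ᵥ y) := mul_le_mul_of_nonneg_right hθge hVy0
  -- trajectories
  intro x hxrec hx0
  have hθk1 : ∀ k : ℕ, θ ^ k ≤ 1 := fun k => pow_le_one₀ hθ0 hθ1.le
  have hVk : ∀ k, x k ⬝ᵥ P *ᵥ x k ≤ θ ^ k * (m * s ^ 2) := by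
    intro k
    induction k with
    | zero => simpa using hx0
    | succ k ih =>
      have hkle : x k ⬝ᵥ P *ᵥ x k ≤ m * s ^ 2 := by
        have := hθk1 k
        nlinarith
      obtain ⟨h1, _⟩ := hstep (x k) hkle
      rw [hxrec k]
      calc F (x k, -(L *ᵥ x k)) ⬝ᵥ P *ᵥ F (x k, -(L *ᵥ x k))
          ≤ θ * (x k ⬝ᵥ P *ᵥ x k) := h1
        _ ≤ θ * (θ ^ k * (m * s ^ 2)) := mul_le_mul_of_nonneg_left ih hθ0
        _ = θ ^ (k + 1) * (m * s ^ 2) := by ring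
  have hVα : ∀ k, x k ⬝ᵥ P *ᵥ x k ≤ m * s ^ 2 := by
    intro k
    have := hθk1 k
    nlinarith [hVk k]
  refine ⟨fun k => ⟨hVα k, (hstep (x k) (hVα k)).2⟩, ?_⟩
  rw [tendsto_zero_iff_norm_tendsto_zero]
  apply squeeze_zero (g := fun k : ℕ => Real.sqrt (θ ^ k * (m * s ^ 2) / m))
    (fun k => norm_nonneg _)
  · intro k
    have h1 : m * ‖x k‖ ^ 2 ≤ θ ^ k * (m * s ^ 2) := le_trans (hmP (x k)) (hVk k)
    have h2 : ‖x k‖ ^ 2 ≤ θ ^ k * (m * s ^ 2) / m := by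
      rw [le_div_iff₀ hm]; linarith
    exact (Real.le_sqrt (norm_nonneg _)
      (div_nonneg (mul_nonneg (pow_nonneg hθ0 k) hα.le) hm.le)).mpr h2
  · have ht : Filter.Tendsto (fun k : ℕ => θ ^ k * (m * s ^ 2) / m) Filter.atTop (nhds 0) := by
      have h1 := tendsto_pow_atTop_nhds_zero_of_lt_one hθ0 hθ1
      have h2 := (h1.mul_const (m * s ^ 2)).div_const m
      simpa using h2
    have hsq : Filter.Tendsto Real.sqrt (nhds 0) (nhds 0) := by
      have := Real.continuous_sqrt.tendsto 0
      simpa [Real.sqrt_zero] using this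
    exact hsq.comp ht
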